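/- Let G be a finite simple graph that is C_3-free and C_5-free, let R be a minimal redundant set of G, and let x ∈ red(R). If y ∈ R is adjacent to x and N(y) ≠ {x}, then at most one of the following holds: (i) R ∩ (N(y) \ {x}) ≠ ∅; (ii) R ∩ (N(x) \ {y}) ≠ ∅. Moreover, if y ∈ red(R), then exactly one of (i) and (ii) holds. -/

import Mathlib

open Set SimpleGraph

variable {V : Type*}

/-- The closed neighborhood `N[v]` of a vertex. -/
def closedNbr (G : SimpleGraph V) (v : V) : Set V := insert v (G.neighborSet v)

/-- Private neighbors of `x` with respect to `I`. -/
def privSet (G : SimpleGraph V) (x : V) (I : Set V) : Set V :=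
  {y ∈ closedNbr G x | closedNbr G y ∩ I = {x}}

/-- A set is irredundant if every element has a private neighbor. -/
def Irred (G : SimpleGraph V) (I : Set V) : Prop := ∀ x ∈ I, (privSet G x I).Nonempty

/-- A maximal irredundant set. -/
def MaxIrred (G : SimpleGraph V) (I : Set V) : Prop :=
  Irred G I ∧ ∀ J : Set V, Irred G J → I ⊆ J → J = I

def Redundant (G : SimpleGraph V) (R : Set V) : Prop := ¬ Irred G R

def MinRedundant (G : SimpleGraph V) (R : Set V) : Prop :=
  Redundant G R ∧ ∀ S : Set V, S ⊂ R → ¬ Redundant G S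

/-- The set of redundant vertices of a set. -/
def redVerts (G : SimpleGraph V) (R : Set V) : Set V := {x ∈ R | privSet G x R = ∅}

def Dominating (G : SimpleGraph V) (D : Set V) : Prop := ∀ v : V, ∃ d ∈ D, v ∈ closedNbr G d

def MinDominating (G : SimpleGraph V) (D : Set V) : Prop :=
  Dominating G D ∧ ∀ S : Set V, S ⊂ D → ¬ Dominating G S

/-- Vertices at distance at most 2 from `x`. -/
def ball2 (G : SimpleGraph V) (x : V) : Set V :=
  {y | y = x ∨ G.Adj x y ∨ ∃ w, G.Adj x w ∧ G.Adj w y}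

/-- Vertices at distance exactly 2 from `x`. -/
def sphere2 (G : SimpleGraph V) (x : V) : Set V :=
  {y | y ≠ x ∧ ¬ G.Adj x y ∧ ∃ w, G.Adj x w ∧ G.Adj w y}

/-- `G` contains no induced cycle of length `k`. -/
def CFree (G : SimpleGraph V) (k : ℕ) : Prop :=
  IsEmpty (SimpleGraph.cycleGraph k ↪g G)

/-- `S` dominates `B` through open neighborhoods. -/
def DomOver (G : SimpleGraph V) (S B : Set V) : Prop := ∀ b ∈ B, ∃ s ∈ S, G.Adj s b

def MinDomOver (G : SimpleGraph V) (S B : Set V) : Prop :=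
  DomOver G S B ∧ ∀ S' : Set V, S' ⊂ S → ¬ DomOver G S' B

/-- `N(Y)`, the union of open neighborhoods of elements of `Y`. -/
def nbrUnion (G : SimpleGraph V) (Y : Set V) : Set V := ⋃ y ∈ Y, G.neighborSet y

/-- Private edges of `x` with respect to `I` in a hypergraph. -/
def hypPriv (H : Set (Set V)) (x : V) (I : Set V) : Set (Set V) := {E ∈ H | E ∩ I = {x}}

def HypIrred (H : Set (Set V)) (I : Set V) : Prop := ∀ x ∈ I, (hypPriv H x I).Nonempty

def HypMaxIrred (H : Set (Set V)) (I : Set V) : Prop :=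
  HypIrred H I ∧ ∀ J : Set V, HypIrred H J → I ⊆ J → J = I

/-- The trace of a hypergraph on a set `S`. -/
def htrace (H : Set (Set V)) (S : Set V) : Set (Set V) :=
  {F | ∃ E ∈ H, F = E ∩ S ∧ (E ∩ S).Nonempty}

/-- The closed-neighborhood hypergraph of a graph. -/
def nbrHyp (G : SimpleGraph V) : Set (Set V) := Set.range (closedNbr G)

/-- The first `i` vertices in the ordering `v` (zero-based: `v 0, …, v (i-1)`). -/
def firstVerts (v : ℕ → V) (i : ℕ) : Set V := {x | ∃ j < i, v j = x}

/-- The incidence co-bipartite graph of the closed-neighborhood hypergraph of `G`: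
`Sum.inl` is the vertex side `V`, `Sum.inr` is the copy `U`. -/
def cobip (G : SimpleGraph V) : SimpleGraph (V ⊕ V) :=
  SimpleGraph.fromRel (fun a b => match a, b with
    | Sum.inl _, Sum.inl _ => True
    | Sum.inr _, Sum.inr _ => True
    | Sum.inl a, Sum.inr b => a = b ∨ G.Adj a b
    | Sum.inr _, Sum.inl _ => False)

lemma mem_closedNbr {G : SimpleGraph V} {u v : V} :
    u ∈ closedNbr G v ↔ u = v ∨ G.Adj v u := by simp [closedNbr]

lemma self_mem_closedNbr {G : SimpleGraph V} (v : V) : v ∈ closedNbr G v :=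
  mem_closedNbr.mpr (Or.inl rfl)

lemma no_tri {G : SimpleGraph V} (h3 : CFree G 3) {a b c : V}
    (hab : G.Adj a b) (hbc : G.Adj b c) (hca : G.Adj c a) : False := by
  have h1 := hab.ne; have h2 := hbc.ne; have h3' := hca.ne.symm
  refine h3.false ⟨⟨![a,b,c], ?_⟩, ?_⟩
  · intro i j h
    fin_cases i <;> fin_cases j <;> simp_all
  · intro i j
    show G.Adj (![a,b,c] i) (![a,b,c] j) ↔ _
    fin_cases i <;> fin_cases j <;>
      simp [hab, hbc, hca, hab.symm, hbc.symm, hca.symm, G.irrefl] <;> decide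

lemma no_c5 {G : SimpleGraph V} (h5 : CFree G 5) {a b c d e : V}
    (hab : G.Adj a b) (hbc : G.Adj b c) (hcd : G.Adj c d) (hde : G.Adj d e) (hea : G.Adj e a)
    (hac : ¬ G.Adj a c) (had : ¬ G.Adj a d) (hbd : ¬ G.Adj b d) (hbe : ¬ G.Adj b e)
    (hce : ¬ G.Adj c e)
    (nac : a ≠ c) (nad : a ≠ d) (nbd : b ≠ d) (nbe : b ≠ e) (nce : c ≠ e) : False := by
  have n1 := hab.ne; have n2 := hbc.ne; have n3 := hcd.ne; have n4 := hde.ne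
  have n5 := hea.ne.symm
  have hca : ¬ G.Adj c a := fun h => hac h.symm
  have hda : ¬ G.Adj d a := fun h => had h.symm
  have hdb : ¬ G.Adj d b := fun h => hbd h.symm
  have heb : ¬ G.Adj e b := fun h => hbe h.symm
  have hec : ¬ G.Adj e c := fun h => hce h.symm
  refine h5.false ⟨⟨![a,b,c,d,e], ?_⟩, ?_⟩
  · intro i j h
    fin_cases i <;> fin_cases j <;> simp_all
  · intro i j
    show G.Adj (![a,b,c,d,e] i) (![a,b,c,d,e] j) ↔ _
    fin_cases i <;> fin_cases j <;>
      simp [hab, hbc, hcd, hde, hea, hab.symm, hbc.symm, hcd.symm, hde.symm, hea.symm,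
        hac, had, hbd, hbe, hce, hca, hda, hdb, heb, hec, G.irrefl] <;> decide

lemma key {G : SimpleGraph V} {R : Set V} (hR : MinRedundant G R) {x : V}
    (hxR : x ∈ R) (hpx : privSet G x R = ∅) {r : V} (hr : r ∈ R) (hrx : r ≠ x) :
    ∃ u, u ∈ closedNbr G x ∧ closedNbr G u ∩ R = {x, r} := by
  have hIrr : Irred G (R \ {r}) :=
    not_not.mp (hR.2 _ (Set.sdiff_singleton_ssubset.mpr hr))
  obtain ⟨u, hu1, hu2⟩ := hIrr x ⟨hxR, by simp [Ne.symm hrx]⟩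
  have hne : closedNbr G u ∩ R ≠ {x} := fun h =>
    Set.eq_empty_iff_forall_notMem.mp hpx u ⟨hu1, h⟩
  have hrmem : r ∈ closedNbr G u := by
    by_contra hru
    apply hne
    rw [← hu2]
    ext v
    exact ⟨fun ⟨h1, h2⟩ => ⟨h1, h2, fun e => hru (e ▸ h1)⟩, fun ⟨h1, h2, _⟩ => ⟨h1, h2⟩⟩
  refine ⟨u, hu1, ?_⟩
  ext v
  constructor
  · rintro ⟨h1, h2⟩
    by_cases hv : v = r
    · simp [hv]
    · have : v ∈ ({x} : Set V) := hu2 ▸ ⟨h1, h2, hv⟩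
      simp_all
  · intro hv
    simp only [Set.mem_insert_iff, Set.mem_singleton_iff] at hv
    rcases hv with rfl | rfl
    · have : v ∈ closedNbr G u ∩ (R \ {r}) := hu2 ▸ rfl
      exact ⟨this.1, this.2.1⟩
    · exact ⟨hrmem, hr⟩

/-- in a `(C₃, C₅)`-free graph, for a minimal redundant set `R`,
`x ∈ red(R)`, and `y ∈ R` adjacent to `x` with `N(y) ≠ {x}`: at most one of
`R ∩ (N(y) \ {x}) ≠ ∅` and `R ∩ (N(x) \ {y}) ≠ ∅` holds; and if moreover
`y ∈ red(R)` then exactly one of them holds. -/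
theorem stmt7 [Fintype V] (G : SimpleGraph V) (h3 : CFree G 3) (h5 : CFree G 5)
    (R : Set V) (hR : MinRedundant G R) (x : V) (hx : x ∈ redVerts G R)
    (y : V) (hyR : y ∈ R) (hadj : G.Adj x y) (hNy : G.neighborSet y ≠ {x}) :
    (¬((R ∩ (G.neighborSet y \ {x})).Nonempty ∧ (R ∩ (G.neighborSet x \ {y})).Nonempty)) ∧
    (y ∈ redVerts G R →
      ((R ∩ (G.neighborSet y \ {x})).Nonempty ∨ (R ∩ (G.neighborSet x \ {y})).Nonempty)) := by
  obtain ⟨hxR, hpx⟩ := hx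
  constructor
  · rintro ⟨⟨a, haR, hay, hax⟩, b, hbR, hbx, hby⟩
    simp only [Set.mem_singleton_iff] at hax hby
    have hay' : G.Adj y a := hay
    have hbx' : G.Adj x b := hbx
    obtain ⟨u, hu1, hu2⟩ := key hR hxR hpx hyR hadj.ne'
    rcases mem_closedNbr.mp hu1 with heq | hxu
    · subst heq
      have hmem : b ∈ closedNbr G u ∩ R :=
        ⟨mem_closedNbr.mpr (Or.inr hbx'), hbR⟩
      rw [hu2] at hmem
      simp only [Set.mem_insert_iff, Set.mem_singleton_iff] at hmem
      rcases hmem with rfl | rfl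
      · exact G.irrefl hbx'
      · exact hby rfl
    · have hyu : y ∈ closedNbr G u := by
        have : y ∈ closedNbr G u ∩ R := by rw [hu2]; simp
        exact this.1
      rcases mem_closedNbr.mp hyu with heq | huy
      · have hmem : a ∈ closedNbr G y ∩ R :=
          ⟨mem_closedNbr.mpr (Or.inr hay'), haR⟩
        rw [heq, hu2] at hmem
        simp only [Set.mem_insert_iff, Set.mem_singleton_iff] at hmem
        rcases hmem with rfl | rfl
        · exact hax rfl
        · exact G.irrefl hay'
      · exact no_tri h3 hxu huy hadj.symm
  · rintro ⟨-, hpy⟩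
    by_contra hcon
    push_neg at hcon
    obtain ⟨h1, h2⟩ := hcon
    have hNy1 : ∀ v, v ∈ R → G.Adj y v → v = x := by
      intro v hv hadjv
      by_contra hne
      exact Set.eq_empty_iff_forall_notMem.mp h1 v ⟨hv, hadjv, by simp [hne]⟩
    have hNx1 : ∀ v, v ∈ R → G.Adj x v → v = y := by
      intro v hv hadjv
      by_contra hne
      exact Set.eq_empty_iff_forall_notMem.mp h2 v ⟨hv, hadjv, by simp [hne]⟩
    have hcNx : closedNbr G x ∩ R = {x, y} := by
      ext v
      constructor
      · rintro ⟨hv1, hv2⟩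
        rcases mem_closedNbr.mp hv1 with rfl | h
        · exact Or.inl rfl
        · exact Or.inr (hNx1 v hv2 h)
      · rintro (rfl | rfl)
        · exact ⟨self_mem_closedNbr v, hxR⟩
        · exact ⟨mem_closedNbr.mpr (Or.inr hadj), hyR⟩
    have hcNy : closedNbr G y ∩ R = {x, y} := by
      ext v
      constructor
      · rintro ⟨hv1, hv2⟩
        rcases mem_closedNbr.mp hv1 with rfl | h
        · exact Or.inr rfl
        · exact Or.inl (hNy1 v hv2 h)
      · rintro (rfl | rfl)
        · exact ⟨mem_closedNbr.mpr (Or.inr hadj.symm), hxR⟩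
        · exact ⟨self_mem_closedNbr v, hyR⟩
    have hz : ∃ z, G.Adj y z ∧ z ≠ x := by
      by_contra h
      push_neg at h
      apply hNy
      ext v
      simp only [mem_neighborSet, Set.mem_singleton_iff]
      exact ⟨fun hv => h v hv, fun hv => hv ▸ hadj.symm⟩
    obtain ⟨z, hyz, hzx⟩ := hz
    have hzne : closedNbr G z ∩ R ≠ {y} := fun h =>
      Set.eq_empty_iff_forall_notMem.mp hpy z ⟨mem_closedNbr.mpr (Or.inr hyz), h⟩
    have hw : ∃ w, w ∈ closedNbr G z ∩ R ∧ w ≠ y := by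
      by_contra h
      push_neg at h
      apply hzne
      ext v
      constructor
      · intro hv
        exact h v hv
      · rintro rfl
        exact ⟨mem_closedNbr.mpr (Or.inr hyz.symm), hyR⟩
    obtain ⟨w, ⟨hwz, hwR⟩, hwy⟩ := hw
    have hwx : w ≠ x := by
      rintro rfl
      rcases mem_closedNbr.mp hwz with rfl | hzw
      · exact hzx rfl
      · exact no_tri h3 hadj hyz hzw
    obtain ⟨u, hu1, hu2⟩ := key hR hxR hpx hwR hwx
    obtain ⟨v, hv1, hv2⟩ := key hR hyR hpy hwR hwy
    have hwu : w ∈ closedNbr G u := by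
      have : w ∈ closedNbr G u ∩ R := by rw [hu2]; simp
      exact this.1
    have hwv : w ∈ closedNbr G v := by
      have : w ∈ closedNbr G v ∩ R := by rw [hv2]; simp
      exact this.1
    have hux : u ≠ x := by
      rintro rfl
      have hy2 : y ∈ closedNbr G u ∩ R := by rw [hcNx]; simp
      rw [hu2] at hy2
      simp only [Set.mem_insert_iff, Set.mem_singleton_iff] at hy2
      rcases hy2 with rfl | rfl
      · exact G.irrefl hadj
      · exact hwy rfl
    have hxu : G.Adj x u := by
      rcases mem_closedNbr.mp hu1 with rfl | h
      · exact absurd rfl hux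
      · exact h
    have hvy : v ≠ y := by
      rintro rfl
      have hx2 : x ∈ closedNbr G v ∩ R := by rw [hcNy]; simp
      rw [hv2] at hx2
      simp only [Set.mem_insert_iff, Set.mem_singleton_iff] at hx2
      rcases hx2 with rfl | rfl
      · exact G.irrefl hadj
      · exact hwx rfl
    have hyv : G.Adj y v := by
      rcases mem_closedNbr.mp hv1 with rfl | h
      · exact absurd rfl hvy
      · exact h
    have huwne : u ≠ w := by
      rintro rfl
      have : u ∈ closedNbr G x ∩ R := ⟨hu1, hwR⟩
      rw [hcNx] at this
      simp only [Set.mem_insert_iff, Set.mem_singleton_iff] at this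
      rcases this with rfl | rfl
      · exact hwx rfl
      · exact hwy rfl
    have huw : G.Adj u w := by
      rcases mem_closedNbr.mp hwu with rfl | h
      · exact absurd rfl huwne.symm
      · exact h
    have hvwne : v ≠ w := by
      rintro rfl
      have : v ∈ closedNbr G y ∩ R := ⟨hv1, hwR⟩
      rw [hcNy] at this
      simp only [Set.mem_insert_iff, Set.mem_singleton_iff] at this
      rcases this with rfl | rfl
      · exact hwx rfl
      · exact hwy rfl
    have hvw : G.Adj v w := by
      rcases mem_closedNbr.mp hwv with rfl | h
      · exact absurd rfl hvwne.symm
      · exact h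
    have nxw : ¬ G.Adj x w := by
      intro h
      have : w ∈ closedNbr G x ∩ R := ⟨mem_closedNbr.mpr (Or.inr h), hwR⟩
      rw [hcNx] at this
      simp only [Set.mem_insert_iff, Set.mem_singleton_iff] at this
      rcases this with rfl | rfl
      · exact hwx rfl
      · exact hwy rfl
    have nxv : ¬ G.Adj x v := by
      intro h
      have : x ∈ closedNbr G v ∩ R := ⟨mem_closedNbr.mpr (Or.inr h.symm), hxR⟩
      rw [hv2] at this
      simp only [Set.mem_insert_iff, Set.mem_singleton_iff] at this
      rcases this with rfl | rfl
      · exact G.irrefl hadj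
      · exact hwx rfl
    have nuy : ¬ G.Adj u y := by
      intro h
      have : y ∈ closedNbr G u ∩ R := ⟨mem_closedNbr.mpr (Or.inr h), hyR⟩
      rw [hu2] at this
      simp only [Set.mem_insert_iff, Set.mem_singleton_iff] at this
      rcases this with rfl | rfl
      · exact G.irrefl hadj
      · exact hwy rfl
    have nwy : ¬ G.Adj w y := by
      intro h
      have : w ∈ closedNbr G y ∩ R := ⟨mem_closedNbr.mpr (Or.inr h.symm), hwR⟩
      rw [hcNy] at this
      simp only [Set.mem_insert_iff, Set.mem_singleton_iff] at this
      rcases this with rfl | rfl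
      · exact hwx rfl
      · exact hwy rfl
    have nuv : ¬ G.Adj u v := fun h => no_tri h3 h hvw huw.symm
    have nxvne : x ≠ v := by
      rintro rfl
      have : x ∈ closedNbr G x ∩ R := ⟨self_mem_closedNbr x, hxR⟩
      rw [hv2] at this
      simp only [Set.mem_insert_iff, Set.mem_singleton_iff] at this
      rcases this with rfl | rfl
      · exact G.irrefl hadj
      · exact hwx rfl
    have nuyne : u ≠ y := by
      rintro rfl
      have : u ∈ closedNbr G u ∩ R := ⟨self_mem_closedNbr u, hyR⟩
      rw [hu2] at this
      simp only [Set.mem_insert_iff, Set.mem_singleton_iff] at this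
      rcases this with rfl | rfl
      · exact G.irrefl hadj
      · exact hwy rfl
    have nuvne : u ≠ v := by
      rintro rfl
      have : y ∈ closedNbr G u ∩ R := by rw [hv2]; simp
      rw [hu2] at this
      simp only [Set.mem_insert_iff, Set.mem_singleton_iff] at this
      rcases this with rfl | rfl
      · exact G.irrefl hadj
      · exact hwy rfl
    exact no_c5 h5 hxu huw hvw.symm hyv.symm hadj.symm
      nxw nxv nuv nuy nwy (Ne.symm hwx) nxvne nuvne nuyne (fun h => hwy h)
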